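/- Let X₁, X₂ be disjoint finite sets with |X₁| = n₁, |X₂| = n₂, and let positive integers k, ℓ satisfy 2k ≤ n₁, 2ℓ ≤ n₂. If F is an intersecting family of subsets of X₁ ∪ X₂ such that every F ∈ F satisfies |F ∩ X₁| = k and |F ∩ X₂| = ℓ, then |F| ≤ max( C(n₁−1,k−1)·C(n₂,ℓ), C(n₁,k)·C(n₂−1,ℓ−1) ). -/

import Mathlib

open Finset
open scoped Fin.NatCast

namespace Stmt11Aux

variable {n : ℕ} [NeZero n]

/-- circular distance on `Fin n` -/
def fdist (a b : Fin n) : ℕ := min (a - b).val (b - a).val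

lemma fdist_comm (a b : Fin n) : fdist a b = fdist b a := min_comm _ _

lemma sub_val (a b : Fin n) : (a - b).val = (n - b.val + a.val) % n := by
  rw [Fin.sub_def]

lemma sub_val_of_le {a b : Fin n} (h : b.val ≤ a.val) : (a - b).val = a.val - b.val := by
  have hb := b.isLt; have ha := a.isLt
  rw [sub_val]
  have : n - b.val + a.val = n + (a.val - b.val) := by omega
  rw [this, Nat.add_mod_left, Nat.mod_eq_of_lt (by omega)]

lemma sub_val_of_gt {a b : Fin n} (h : a.val < b.val) : (a - b).val = n - (b.val - a.val) := by
  have hb := b.isLt; have ha := a.isLt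
  rw [sub_val, Nat.mod_eq_of_lt (by omega)]
  omega

lemma fdist_eq (a b : Fin n) :
    fdist a b = min (a.val - b.val + (b.val - a.val)) (n - (a.val - b.val + (b.val - a.val))) := by
  rcases le_or_gt b.val a.val with h | h
  · rcases eq_or_lt_of_le h with h' | h'
    · have : a = b := Fin.ext h'.symm
      subst this
      simp [fdist, sub_self]
    · rw [fdist, sub_val_of_le h, sub_val_of_gt h']
      have := a.isLt; have := b.isLt; omega
  · rw [fdist, sub_val_of_le h.le, sub_val_of_gt h]
    have := a.isLt; have := b.isLt; omega

lemma fdist_sub_le (u v : Fin n) : fdist u v ≤ u.val ∨ fdist u v ≤ v.val := by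
  rcases le_or_gt v.val u.val with h | h
  · left
    calc fdist u v ≤ (u - v).val := min_le_left _ _
      _ = u.val - v.val := sub_val_of_le h
      _ ≤ u.val := by omega
  · right
    calc fdist u v ≤ (v - u).val := min_le_right _ _
      _ = v.val - u.val := sub_val_of_le h.le
      _ ≤ v.val := by omega

lemma fdist_eq_sub (a b : Fin n) : fdist a b = fdist (a - b) 0 := by
  rw [fdist, fdist, sub_zero, zero_sub, neg_sub]

lemma sub_val_add_sub_val {u v : Fin n} (h : u ≠ v) : (u - v).val + (v - u).val = n := by
  rcases le_or_gt v.val u.val with h' | h'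
  · have h'' : v.val < u.val := lt_of_le_of_ne h' (fun e => h (Fin.ext e.symm))
    rw [sub_val_of_le h', sub_val_of_gt h'']
    have := u.isLt; omega
  · rw [sub_val_of_gt h', sub_val_of_le h'.le]
    have := v.isLt; omega

lemma fdist_add (a : Fin n) (t : ℕ) (h : t < n) : fdist a (a + ⟨t, h⟩) = min t (n - t) := by
  have h1 : a + (⟨t, h⟩ : Fin n) - a = ⟨t, h⟩ := add_sub_cancel_left a _
  have h2 : a - (a + (⟨t, h⟩ : Fin n)) = -⟨t, h⟩ := by
    rw [sub_add_eq_sub_sub, sub_self, zero_sub]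
  rcases Nat.eq_zero_or_pos t with ht | ht
  · subst ht
    have : (⟨0, h⟩ : Fin n) = 0 := by exact Fin.ext (by simp)
    rw [fdist, h1, h2, this]
    simp
  · rw [fdist, h1, h2]
    have : (-(⟨t, h⟩ : Fin n)).val = n - t := by
      rw [neg_eq_zero_sub, sub_val_of_gt (by simpa using ht)]
      simp
    rw [this, Fin.val_mk, min_comm]

/-- deleting a point from the circle only shrinks distances -/
lemma fdist_succAbove [NeZero (n+1)] (x : Fin (n + 1)) (i j : Fin n) :
    fdist i j ≤ fdist (x.succAbove i) (x.succAbove j) := by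
  have hvi : ((x.succAbove i).val = i.val ∧ i.val < x.val) ∨
      ((x.succAbove i).val = i.val + 1 ∧ x.val ≤ i.val) := by
    rcases lt_or_ge (i.castSucc) x with h | h
    · left
      refine ⟨by rw [Fin.succAbove_of_castSucc_lt _ _ h]; simp, ?_⟩
      simpa [Fin.lt_def] using h
    · right
      refine ⟨by rw [Fin.succAbove_of_le_castSucc _ _ h]; simp, ?_⟩
      simpa [Fin.le_def] using h
  have hvj : ((x.succAbove j).val = j.val ∧ j.val < x.val) ∨
      ((x.succAbove j).val = j.val + 1 ∧ x.val ≤ j.val) := by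
    rcases lt_or_ge (j.castSucc) x with h | h
    · left
      refine ⟨by rw [Fin.succAbove_of_castSucc_lt _ _ h]; simp, ?_⟩
      simpa [Fin.lt_def] using h
    · right
      refine ⟨by rw [Fin.succAbove_of_le_castSucc _ _ h]; simp, ?_⟩
      simpa [Fin.le_def] using h
  rw [fdist_eq, fdist_eq]
  have hi := i.isLt; have hj := j.isLt
  rcases hvi with ⟨h1, h1'⟩ | ⟨h1, h1'⟩ <;> rcases hvj with ⟨h2, h2'⟩ | ⟨h2, h2'⟩ <;> omega

/-- the arc of length `k` starting at `i` -/
def arc (i : Fin n) (k : ℕ) : Finset (Fin n) := univ.filter (fun x => (x - i).val < k)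

lemma mem_arc {i x : Fin n} {k : ℕ} : x ∈ arc i k ↔ (x - i).val < k := by
  simp [arc]

lemma self_mem_arc {i : Fin n} {k : ℕ} (hk : 0 < k) : i ∈ arc i k := by
  simp [mem_arc, sub_self, hk]

lemma arc_start_eq {i i' : Fin n} {k : ℕ} (h2k : 2 * k ≤ n)
    (h1 : i' ∈ arc i k) (h2 : i ∈ arc i' k) : i = i' := by
  by_contra hne
  have := sub_val_add_sub_val (n := n) (u := i) (v := i')
  rw [mem_arc] at h1 h2
  have := this (fun e => hne e)
  omega

lemma card_arc (i : Fin n) {k : ℕ} (hk : k ≤ n) : (arc i k).card = k := by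
  calc (arc i k).card = (Finset.range k).card := ?_
    _ = k := Finset.card_range k
  apply Finset.card_bij (fun (x : Fin n) _ => (x - i).val)
  · intro x hx; rw [mem_arc] at hx; simpa using hx
  · intro x hx y hy hxy
    have : x - i = y - i := Fin.ext hxy
    exact sub_left_injective this
  · intro t ht
    rw [Finset.mem_range] at ht
    refine ⟨i + ⟨t, lt_of_lt_of_le ht hk⟩, ?_, ?_⟩
    · rw [mem_arc]
      have : i + (⟨t, lt_of_lt_of_le ht hk⟩ : Fin n) - i = ⟨t, _⟩ := add_sub_cancel_left i _
      rw [this]; exact ht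
    · have : i + (⟨t, lt_of_lt_of_le ht hk⟩ : Fin n) - i = ⟨t, _⟩ := add_sub_cancel_left i _
      rw [this]

/-- if two arcs of length `k` intersect then their starting points are at distance `< k` -/
lemma fdist_lt_of_arc_inter {i i' x : Fin n} {k : ℕ} (hk : 0 < k)
    (h1 : x ∈ arc i k) (h2 : x ∈ arc i' k) : fdist i i' ≤ k - 1 := by
  rw [mem_arc] at h1 h2
  have key : i' - i = (x - i) - (x - i') := by abel
  have : fdist i i' = min ((i' - i).val) ((i - i').val) := by
    rw [fdist, min_comm]
  rw [this]
  have key2 : i - i' = (x - i') - (x - i) := by abel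
  rw [key, key2]
  rcases fdist_sub_le (x - i) (x - i') with hle | hle <;> rw [fdist] at hle <;> omega


/-- cross-intersecting lemma on the circle -/
lemma cross (k : ℕ) (hk : 0 < k) (m : ℕ) : ∀ [NeZero m], 2 * k ≤ m →
    ∀ (A B : Finset (Fin m)), A.Nonempty → B.Nonempty →
    (∀ a ∈ A, ∀ b ∈ B, fdist a b ≤ k - 1) →
    A.card + B.card ≤ 2 * k := by
  induction m using Nat.strong_induction_on with
  | _ m IH =>
  intro _ hm A B hA hB hcross
  rcases eq_or_lt_of_le hm with hm2 | hm2
  · -- m = 2k : pairing argument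
    have hc : k < m := by omega
    set c : Fin m := ⟨k, hc⟩ with hcdef
    have hdist : ∀ z : Fin m, fdist z (z + c) = k := by
      intro z
      rw [fdist_add z k hc]
      omega
    have key : ∀ z : Fin m,
        ((if z ∈ A then 1 else 0) + (if z ∈ B then 1 else 0)) +
        ((if z + c ∈ A then 1 else 0) + (if z + c ∈ B then 1 else 0)) ≤ 2 := by
      intro z
      by_cases h1 : z ∈ A <;> by_cases h2 : z ∈ B <;>
        by_cases h3 : z + c ∈ A <;> by_cases h4 : z + c ∈ B <;>
        simp only [h1, h2, h3, h4, if_true, if_false] <;>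
        first
          | (exfalso
             have := hcross z h1 (z + c) h4
             have := hdist z
             omega)
          | (exfalso
             have := hcross (z + c) h3 z h2
             rw [fdist_comm] at this
             have := hdist z
             omega)
          | omega
    have cardS : ∀ (S : Finset (Fin m)), S.card = ∑ z : Fin m, (if z ∈ S then 1 else 0) := by
      intro S
      have he : univ.filter (fun z => z ∈ S) = S := Finset.filter_univ_mem S
      calc S.card = (univ.filter (fun z => z ∈ S)).card := by rw [he]
        _ = ∑ z : Fin m, (if z ∈ S then 1 else 0) := Finset.card_filter _ _
    have hsum : A.card + B.card = ∑ z : Fin m, ((if z ∈ A then 1 else 0) + (if z ∈ B then 1 else 0)) := by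
      rw [Finset.sum_add_distrib, ← cardS A, ← cardS B]
    have hre : ∑ z : Fin m, ((if z + c ∈ A then 1 else 0) + (if z + c ∈ B then 1 else 0))
        = ∑ z : Fin m, ((if z ∈ A then 1 else 0) + (if z ∈ B then 1 else 0)) := by
      exact Fintype.sum_equiv (Equiv.addRight c) _ _ (fun z => rfl)
    have h2 : 2 * (A.card + B.card) ≤ 2 * m := by
      have := Finset.sum_le_sum (s := (univ : Finset (Fin m))) (fun z _ => key z)
      rw [Finset.sum_add_distrib, hre] at this
      simp only [Finset.sum_const, Finset.card_univ, Fintype.card_fin, smul_eq_mul] at this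
      omega
    omega
  · -- m ≥ 2k + 1
    by_cases hfull : ∀ z : Fin m, z ∈ A ∪ B
    · -- contradiction case
      exfalso
      have hc : k < m := by omega
      have hc' : k + 1 < m := by omega
      set c : Fin m := ⟨k, hc⟩ with hcdef
      set c' : Fin m := ⟨k + 1, hc'⟩ with hc'def
      have hdist : ∀ z : Fin m, k ≤ fdist z (z + c) := by
        intro z; rw [fdist_add z k hc]; omega
      have hdist' : ∀ z : Fin m, k ≤ fdist z (z + c') := by
        intro z; rw [fdist_add z (k+1) hc']; omega
      have hdisj : ∀ z : Fin m, z ∈ A → z ∈ B → False := by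
        intro z hzA hzB
        rcases Finset.mem_union.mp (hfull (z + c)) with h | h
        · have := hcross (z + c) h z hzB
          rw [fdist_comm] at this
          have := hdist z; omega
        · have := hcross z hzA (z + c) h
          have := hdist z; omega
      have inv1 : ∀ z : Fin m, z ∈ A ↔ z + c ∈ A := by
        intro z
        constructor
        · intro hz
          rcases Finset.mem_union.mp (hfull (z + c)) with h | h
          · exact h
          · exact absurd (hcross z hz (z + c) h) (by have := hdist z; omega)
        · intro hz
          rcases Finset.mem_union.mp (hfull z) with h | h
          · exact h
          · exact absurd (hcross (z + c) hz z h) (by rw [fdist_comm]; have := hdist z; omega)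
      have inv1' : ∀ z : Fin m, z ∈ A ↔ z + c' ∈ A := by
        intro z
        constructor
        · intro hz
          rcases Finset.mem_union.mp (hfull (z + c')) with h | h
          · exact h
          · exact absurd (hcross z hz (z + c') h) (by have := hdist' z; omega)
        · intro hz
          rcases Finset.mem_union.mp (hfull z) with h | h
          · exact h
          · exact absurd (hcross (z + c') hz z h) (by rw [fdist_comm]; have := hdist' z; omega)
      have hcc : (1 : Fin m) + c = c' := by
        apply Fin.ext
        rw [Fin.add_def]
        have h1 : (1 : Fin m).val = 1 := by
          rw [Fin.val_one', Nat.mod_eq_of_lt (show (1:ℕ) < m by omega)]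
        show ((1 : Fin m).val + k) % m = k + 1
        rw [h1]
        have hmod : (1 + k) % m = 1 + k := Nat.mod_eq_of_lt (by omega)
        rw [hmod]
        omega
      have inv2 : ∀ z : Fin m, z ∈ A ↔ z + 1 ∈ A := by
        intro z
        rw [inv1' z, inv1 (z + 1)]
        rw [add_assoc, hcc]
      have allcast : ∀ (t : ℕ) (z : Fin m), z ∈ A → z + (t : Fin m) ∈ A := by
        intro t
        induction t with
        | zero => intro z hz; simpa using hz
        | succ s ih =>
          intro z hz
          have : ((s + 1 : ℕ) : Fin m) = (s : Fin m) + 1 := by push_cast; ring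
          rw [this, ← add_assoc]
          exact (inv2 _).mp (ih z hz)
      obtain ⟨a₀, ha₀⟩ := hA
      obtain ⟨b₀, hb₀⟩ := hB
      have : b₀ ∈ A := by
        have := allcast ((b₀ - a₀).val) a₀ ha₀
        rwa [Fin.cast_val_eq_self, add_sub_cancel] at this
      exact hdisj b₀ this hb₀
    · -- delete a point
      push_neg at hfull
      obtain ⟨x, hx⟩ := hfull
      obtain ⟨mm, rfl⟩ : ∃ mm, m = mm + 1 := ⟨m - 1, by omega⟩
      haveI : NeZero mm := ⟨by omega⟩
      set A' : Finset (Fin mm) := univ.filter (fun i => x.succAbove i ∈ A) with hA'def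
      set B' : Finset (Fin mm) := univ.filter (fun i => x.succAbove i ∈ B) with hB'def
      have hAx : x ∉ A := fun h => hx (Finset.mem_union_left _ h)
      have hBx : x ∉ B := fun h => hx (Finset.mem_union_right _ h)
      have himA : A'.image (x.succAbove) = A := by
        ext y
        simp only [Finset.mem_image, hA'def, Finset.mem_filter, Finset.mem_univ, true_and]
        constructor
        · rintro ⟨i, hi, rfl⟩; exact hi
        · intro hy
          obtain ⟨i, hi⟩ := Fin.exists_succAbove_eq (x := y) (y := x) (fun e => hAx (e ▸ hy))
          exact ⟨i, hi.symm ▸ hy, hi⟩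
      have himB : B'.image (x.succAbove) = B := by
        ext y
        simp only [Finset.mem_image, hB'def, Finset.mem_filter, Finset.mem_univ, true_and]
        constructor
        · rintro ⟨i, hi, rfl⟩; exact hi
        · intro hy
          obtain ⟨i, hi⟩ := Fin.exists_succAbove_eq (x := y) (y := x) (fun e => hBx (e ▸ hy))
          exact ⟨i, hi.symm ▸ hy, hi⟩
      have hcardA : A'.card = A.card := by
        rw [← himA]; exact (Finset.card_image_of_injective _ (Fin.succAbove_right_injective)).symm
      have hcardB : B'.card = B.card := by
        rw [← himB]; exact (Finset.card_image_of_injective _ (Fin.succAbove_right_injective)).symm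
      have hA' : A'.Nonempty := by
        rw [← Finset.card_pos, hcardA, Finset.card_pos]; exact hA
      have hB' : B'.Nonempty := by
        rw [← Finset.card_pos, hcardB, Finset.card_pos]; exact hB
      have hcross' : ∀ a ∈ A', ∀ b ∈ B', fdist a b ≤ k - 1 := by
        intro a ha b hb
        rw [hA'def, Finset.mem_filter] at ha
        rw [hB'def, Finset.mem_filter] at hb
        exact le_trans (fdist_succAbove x a b) (hcross _ ha.2 _ hb.2)
      have := IH mm (by omega) (by omega) A' B' hA' hB' hcross'
      omega


/-- the circular weight lemma -/
lemma weight (k l N : ℕ) (hk : 0 < k) (hl : 0 < l) (hN : 2 * k ≤ N) (m : ℕ) :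
    ∀ [NeZero m], 2 * l ≤ m →
    ∀ (w : Fin m → ℕ), (∀ j, w j ≤ N) →
    (∀ j j', l ≤ fdist j j' → w j = 0 ∨ w j' = 0 ∨ w j + w j' ≤ 2 * k) →
    ∑ j, w j ≤ max (k * m) (l * N) := by
  induction m using Nat.strong_induction_on with
  | _ m IH =>
  intro _ hm w hwN hfar
  have hm0 : 0 < m := by omega
  by_cases hz : ∃ x, w x = 0
  · rcases eq_or_lt_of_le hm with hm2 | hm2
    · -- m = 2l : pairing, bound l * N
      have hc : l < m := by omega
      set c : Fin m := ⟨l, hc⟩ with hcdef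
      have hdist : ∀ z : Fin m, l ≤ fdist z (z + c) := by
        intro z; rw [fdist_add z l hc]; omega
      have key : ∀ z : Fin m, w z + w (z + c) ≤ N := by
        intro z
        rcases hfar z (z + c) (hdist z) with h | h | h
        · rw [h]; simpa using hwN (z + c)
        · rw [h]; simpa using hwN z
        · omega
      have hre : ∑ z : Fin m, w (z + c) = ∑ z : Fin m, w z :=
        Fintype.sum_equiv (Equiv.addRight c) _ _ (fun z => rfl)
      have h2 : 2 * (∑ z : Fin m, w z) ≤ m * N := by
        have := Finset.sum_le_sum (s := (univ : Finset (Fin m))) (fun z _ => key z)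
        rw [Finset.sum_add_distrib, hre] at this
        simp only [Finset.sum_const, Finset.card_univ, Fintype.card_fin, smul_eq_mul] at this
        omega
      have : m * N = 2 * (l * N) := by rw [← hm2]; ring
      have hfin : ∑ z : Fin m, w z ≤ l * N := by omega
      exact le_trans hfin (le_max_right _ _)
    · -- delete the zero point
      obtain ⟨x, hx⟩ := hz
      obtain ⟨mm, rfl⟩ : ∃ mm, m = mm + 1 := ⟨m - 1, by omega⟩
      haveI : NeZero mm := ⟨by omega⟩
      set w' : Fin mm → ℕ := fun i => w (x.succAbove i) with hw'def
      have hsum : ∑ j, w j = ∑ i, w' i := by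
        rw [Fin.sum_univ_succAbove w x, hx, zero_add]
      have hfar' : ∀ j j', l ≤ fdist j j' → w' j = 0 ∨ w' j' = 0 ∨ w' j + w' j' ≤ 2 * k := by
        intro j j' hjj
        exact hfar _ _ (le_trans hjj (fdist_succAbove x j j'))
      have := IH mm (by omega) (by omega) w' (fun j => hwN _) hfar'
      rw [hsum]
      have hmono : k * mm ≤ k * (mm + 1) := Nat.mul_le_mul_left _ (by omega)
      omega
  · -- no zeros: all far pairs sum to ≤ 2k, bound k * m
    push_neg at hz
    have hc : m / 2 < m := by omega
    set c : Fin m := ⟨m / 2, hc⟩ with hcdef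
    have hdist : ∀ z : Fin m, l ≤ fdist z (z + c) := by
      intro z; rw [fdist_add z (m/2) hc]; omega
    have key : ∀ z : Fin m, w z + w (z + c) ≤ 2 * k := by
      intro z
      rcases hfar z (z + c) (hdist z) with h | h | h
      · exact absurd h (hz z)
      · exact absurd h (hz (z + c))
      · exact h
    have hre : ∑ z : Fin m, w (z + c) = ∑ z : Fin m, w z :=
      Fintype.sum_equiv (Equiv.addRight c) _ _ (fun z => rfl)
    have h2 : 2 * (∑ z : Fin m, w z) ≤ m * (2 * k) := by
      have := Finset.sum_le_sum (s := (univ : Finset (Fin m))) (fun z _ => key z)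
      rw [Finset.sum_add_distrib, hre] at this
      simp only [Finset.sum_const, Finset.card_univ, Fintype.card_fin, smul_eq_mul] at this
      omega
    have heq : m * (2 * k) = 2 * (k * m) := by ring
    have hfin : ∑ z : Fin m, w z ≤ k * m := by omega
    exact le_trans hfin (le_max_left _ _)


/-- bound for "close in one coordinate" subsets of a product of two circles -/
lemma product_bound (k l m n' : ℕ) (hk : 0 < k) (hl : 0 < l)
    (hm : 2 * k ≤ m) (hn : 2 * l ≤ n') [NeZero m] [NeZero n']
    (T : Finset (Fin m × Fin n'))
    (hT : ∀ p ∈ T, ∀ q ∈ T, fdist p.1 q.1 ≤ k - 1 ∨ fdist p.2 q.2 ≤ l - 1) :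
    T.card ≤ max (k * n') (l * m) := by
  set w : Fin n' → ℕ := fun j => (T.filter (fun p => p.2 = j)).card with hwdef
  have hcard : T.card = ∑ j, w j := by
    exact Finset.card_eq_sum_card_fiberwise (f := Prod.snd) (fun p _ => Finset.mem_univ _)
  have hwN : ∀ j, w j ≤ m := by
    intro j
    calc w j = ((T.filter (fun p => p.2 = j)).image Prod.fst).card := by
          rw [Finset.card_image_of_injOn]
          intro p hp q hq hpq
          rw [Finset.mem_coe, Finset.mem_filter] at hp hq
          exact Prod.ext hpq (hp.2.trans hq.2.symm)
      _ ≤ (univ : Finset (Fin m)).card := Finset.card_le_card (Finset.subset_univ _)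
      _ = m := by simp
  have hfar : ∀ j j', l ≤ fdist j j' → w j = 0 ∨ w j' = 0 ∨ w j + w j' ≤ 2 * k := by
    intro j j' hjj
    by_cases h1 : w j = 0
    · exact Or.inl h1
    by_cases h2 : w j' = 0
    · exact Or.inr (Or.inl h2)
    refine Or.inr (Or.inr ?_)
    set A : Finset (Fin m) := (T.filter (fun p => p.2 = j)).image Prod.fst with hAdef
    set B : Finset (Fin m) := (T.filter (fun p => p.2 = j')).image Prod.fst with hBdef
    have hAcard : A.card = w j := by
      rw [hAdef, Finset.card_image_of_injOn]
      intro p hp q hq hpq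
      rw [Finset.mem_coe, Finset.mem_filter] at hp hq
      exact Prod.ext hpq (hp.2.trans hq.2.symm)
    have hBcard : B.card = w j' := by
      rw [hBdef, Finset.card_image_of_injOn]
      intro p hp q hq hpq
      rw [Finset.mem_coe, Finset.mem_filter] at hp hq
      exact Prod.ext hpq (hp.2.trans hq.2.symm)
    have hAne : A.Nonempty := by
      rw [← Finset.card_pos, hAcard]; omega
    have hBne : B.Nonempty := by
      rw [← Finset.card_pos, hBcard]; omega
    have hcr : ∀ a ∈ A, ∀ b ∈ B, fdist a b ≤ k - 1 := by
      intro a ha b hb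
      rw [hAdef, Finset.mem_image] at ha
      rw [hBdef, Finset.mem_image] at hb
      obtain ⟨p, hp, rfl⟩ := ha
      obtain ⟨q, hq, rfl⟩ := hb
      rw [Finset.mem_filter] at hp hq
      rcases hT p hp.1 q hq.1 with h | h
      · exact h
      · rw [hp.2, hq.2] at h
        omega
    have := cross k hk m hm A B hAne hBne hcr
    omega
  rw [hcard]
  exact weight k l m hk hl hm n' hn w hwN hfar


variable {α : Type*} [DecidableEq α]

/-- lower bound on the number of (equiv, arc-start) pairs representing a given trace -/
lemma count_good (X A : Finset α) (nn kk : ℕ) [NeZero nn]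
    (hX : X.card = nn) (hk : 0 < kk) (h2k : 2 * kk ≤ nn) (hA : (A ∩ X).card = kk) :
    nn * (kk.factorial * (nn - kk).factorial) ≤
      ((univ : Finset ((Fin nn ≃ ↥X) × Fin nn)).filter
        (fun q => ∀ x : Fin nn, (x ∈ arc q.2 kk ↔ ((q.1 x : α) ∈ A)))).card := by
  have hcardX : Fintype.card ↥X = nn := by rw [Fintype.card_coe, hX]
  -- card of the subtype of X-elements lying in A
  have eqXA : {y : ↥X // (y : α) ∈ A} ≃ {z : α // z ∈ X ∩ A} :=
    { toFun := fun y => ⟨y.1.1, Finset.mem_inter.mpr ⟨y.1.2, y.2⟩⟩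
      invFun := fun z => ⟨⟨z.1, (Finset.mem_inter.mp z.2).1⟩, (Finset.mem_inter.mp z.2).2⟩
      left_inv := fun y => rfl
      right_inv := fun z => rfl }
  have hqcard : Fintype.card {y : ↥X // (y : α) ∈ A} = kk := by
    rw [Fintype.card_congr eqXA, Fintype.card_coe, Finset.inter_comm, hA]
  have hqcard' : Fintype.card {y : ↥X // ¬((y : α) ∈ A)} = nn - kk := by
    rw [Fintype.card_subtype_compl, hqcard, hcardX]
  -- for each i, card of the arc subtype
  have hpcard : ∀ i : Fin nn, Fintype.card {x : Fin nn // x ∈ arc i kk} = kk := by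
    intro i
    rw [Fintype.card_coe, card_arc i (by omega)]
  have hpcard' : ∀ i : Fin nn, Fintype.card {x : Fin nn // ¬(x ∈ arc i kk)} = nn - kk := by
    intro i
    rw [Fintype.card_subtype_compl, hpcard i, Fintype.card_fin]
  -- base equivalence e₀ for each i
  have e₀p : ∀ i : Fin nn, ∃ e : Fin nn ≃ ↥X, ∀ x : Fin nn, (x ∈ arc i kk ↔ ((e x : α) ∈ A)) := by
    intro i
    have σa : {x : Fin nn // x ∈ arc i kk} ≃ {y : ↥X // (y : α) ∈ A} :=
      Fintype.equivOfCardEq (by rw [hpcard i, hqcard])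
    have σb : {x : Fin nn // ¬(x ∈ arc i kk)} ≃ {y : ↥X // ¬((y : α) ∈ A)} :=
      Fintype.equivOfCardEq (by rw [hpcard' i, hqcard'])
    refine ⟨(Equiv.sumCompl (· ∈ arc i kk)).symm.trans ((Equiv.sumCongr σa σb).trans
      (Equiv.sumCompl (fun y : ↥X => (y : α) ∈ A))), ?_⟩
    intro x
    by_cases hp : x ∈ arc i kk
    · simp only [Equiv.trans_apply, Equiv.sumCompl_symm_apply_of_pos hp,
        Equiv.sumCongr_apply, Sum.map_inl, Equiv.sumCompl_apply_inl]
      exact iff_of_true hp (σa ⟨x, hp⟩).2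
    · simp only [Equiv.trans_apply, Equiv.sumCompl_symm_apply_of_neg hp,
        Equiv.sumCongr_apply, Sum.map_inr, Equiv.sumCompl_apply_inr]
      exact iff_of_false hp (σb ⟨x, hp⟩).2
  choose e₀ he₀ using e₀p
  -- the injection
  have ca : ∀ i : Fin nn, {x : Fin nn // x ∈ arc i kk} ≃ Fin kk :=
    fun i => Fintype.equivFinOfCardEq (hpcard i)
  have cb : ∀ i : Fin nn, {x : Fin nn // ¬(x ∈ arc i kk)} ≃ Fin (nn - kk) :=
    fun i => Fintype.equivFinOfCardEq (hpcard' i)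
  set inn : Fin nn → Equiv.Perm (Fin kk) → Equiv.Perm (Fin (nn - kk)) → (Fin nn ≃ Fin nn) :=
    fun i σ τ => ((Equiv.sumCompl (· ∈ arc i kk)).symm.trans
      ((Equiv.sumCongr ((ca i).permCongr.symm σ) ((cb i).permCongr.symm τ)).trans
        (Equiv.sumCompl (· ∈ arc i kk)))) with hinndef
  set Φ : Fin nn × Equiv.Perm (Fin kk) × Equiv.Perm (Fin (nn - kk)) →
      (Fin nn ≃ ↥X) × Fin nn :=
    fun t => ((inn t.1 t.2.1 t.2.2).trans (e₀ t.1), t.1) with hΦdef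
  have hinner : ∀ (i : Fin nn) (σ : Equiv.Perm (Fin kk)) (τ : Equiv.Perm (Fin (nn - kk)))
      (x : Fin nn) (hx : x ∈ arc i kk),
      inn i σ τ x = (((ca i).permCongr.symm σ) ⟨x, hx⟩ : {x // x ∈ arc i kk}) := by
    intro i σ τ x hx
    simp only [hinndef, Equiv.trans_apply, Equiv.sumCompl_symm_apply_of_pos hx,
      Equiv.sumCongr_apply, Sum.map_inl, Equiv.sumCompl_apply_inl]
  have hinner' : ∀ (i : Fin nn) (σ : Equiv.Perm (Fin kk)) (τ : Equiv.Perm (Fin (nn - kk)))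
      (x : Fin nn) (hx : ¬(x ∈ arc i kk)),
      inn i σ τ x = (((cb i).permCongr.symm τ) ⟨x, hx⟩ : {x // ¬(x ∈ arc i kk)}) := by
    intro i σ τ x hx
    simp only [hinndef, Equiv.trans_apply, Equiv.sumCompl_symm_apply_of_neg hx,
      Equiv.sumCongr_apply, Sum.map_inr, Equiv.sumCompl_apply_inr]
  have hgood : ∀ t, (∀ x : Fin nn, (x ∈ arc (Φ t).2 kk ↔ (((Φ t).1 x : α) ∈ A))) := by
    rintro ⟨i, σ, τ⟩ x
    have happ : ((Φ (i, σ, τ)).1) x = (e₀ i) (inn i σ τ x) := rfl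
    have h2 : (Φ (i, σ, τ)).2 = i := rfl
    rw [happ, h2]
    by_cases hx : x ∈ arc i kk
    · rw [hinner i σ τ x hx]
      have hy : ((((ca i).permCongr.symm σ) ⟨x, hx⟩ : {x // x ∈ arc i kk}) : Fin nn) ∈ arc i kk :=
        (((ca i).permCongr.symm σ) ⟨x, hx⟩).2
      exact iff_of_true hx ((he₀ i _).mp hy)
    · rw [hinner' i σ τ x hx]
      have hy : ¬(((((cb i).permCongr.symm τ) ⟨x, hx⟩ : {x // ¬(x ∈ arc i kk)}) : Fin nn) ∈ arc i kk) :=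
        (((cb i).permCongr.symm τ) ⟨x, hx⟩).2
      exact iff_of_false hx (fun hmem => hy ((he₀ i _).mpr hmem))
  have hinj : Function.Injective Φ := by
    rintro ⟨i, σ, τ⟩ ⟨i', σ', τ'⟩ heq
    have hi : i = i' := congrArg Prod.snd heq
    subst hi
    have h1 : ∀ x : Fin nn, inn i σ τ x = inn i σ' τ' x := by
      intro x
      apply (e₀ i).injective
      have := congrArg (fun (q : (Fin nn ≃ ↥X) × Fin nn) => q.1 x) heq
      exact this
    have hσ : ((ca i).permCongr.symm) σ = ((ca i).permCongr.symm) σ' := by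
      apply Equiv.ext
      rintro ⟨x, hx⟩
      apply Subtype.ext
      have h2 := h1 x
      rw [hinner i σ τ x hx, hinner i σ' τ' x hx] at h2
      exact h2
    have hτ : ((cb i).permCongr.symm) τ = ((cb i).permCongr.symm) τ' := by
      apply Equiv.ext
      rintro ⟨x, hx⟩
      apply Subtype.ext
      have h2 := h1 x
      rw [hinner' i σ τ x hx, hinner' i σ' τ' x hx] at h2
      exact h2
    have e1 : σ = σ' := ((ca i).permCongr.symm).injective hσ
    have e2 : τ = τ' := ((cb i).permCongr.symm).injective hτ
    rw [e1, e2]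
  have hmaps : ∀ t ∈ (univ : Finset (Fin nn × Equiv.Perm (Fin kk) × Equiv.Perm (Fin (nn - kk)))),
      Φ t ∈ ((univ : Finset ((Fin nn ≃ ↥X) × Fin nn)).filter
        (fun q => ∀ x : Fin nn, (x ∈ arc q.2 kk ↔ ((q.1 x : α) ∈ A)))) := by
    intro t _
    rw [Finset.mem_filter]
    exact ⟨Finset.mem_univ _, hgood t⟩
  have hle := Finset.card_le_card_of_injOn Φ hmaps (fun a _ b _ h => hinj h)
  calc nn * (kk.factorial * (nn - kk).factorial)
      = (univ : Finset (Fin nn × Equiv.Perm (Fin kk) × Equiv.Perm (Fin (nn - kk)))).card := by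
        simp [Finset.card_univ, Fintype.card_perm, Fintype.card_fin]
    _ ≤ _ := hle


lemma max_mul_right (a b c : ℕ) : max a b * c = max (a * c) (b * c) := by
  rcases le_total a b with h | h
  · rw [max_eq_right h, max_eq_right (Nat.mul_le_mul_right c h)]
  · rw [max_eq_left h, max_eq_left (Nat.mul_le_mul_right c h)]

lemma mul_max_left (a b c : ℕ) : a * max b c = max (a * b) (a * c) := by
  rcases le_total b c with h | h
  · rw [max_eq_right h, max_eq_right (Nat.mul_le_mul_left a h)]
  · rw [max_eq_left h, max_eq_left (Nat.mul_le_mul_left a h)]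


end Stmt11Aux

open Stmt11Aux in
theorem stmt11 {α : Type*} [DecidableEq α] (X₁ X₂ : Finset α) (hdisj : Disjoint X₁ X₂)
    (n₁ n₂ k ℓ : ℕ) (hn₁ : X₁.card = n₁) (hn₂ : X₂.card = n₂)
    (hk : 0 < k) (hl : 0 < ℓ) (h2k : 2 * k ≤ n₁) (h2l : 2 * ℓ ≤ n₂)
    (F : Finset (Finset α)) (hsub : ∀ A ∈ F, A ⊆ X₁ ∪ X₂)
    (hsizes : ∀ A ∈ F, (A ∩ X₁).card = k ∧ (A ∩ X₂).card = ℓ)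
    (hint : ∀ A ∈ F, ∀ B ∈ F, (A ∩ B).Nonempty) :
    F.card ≤ max ((n₁ - 1).choose (k - 1) * n₂.choose ℓ)
                 (n₁.choose k * (n₂ - 1).choose (ℓ - 1)) := by
  haveI : NeZero n₁ := ⟨by omega⟩
  haveI : NeZero n₂ := ⟨by omega⟩
  classical
  -- goodness predicates
  set Good₁ : (Fin n₁ ≃ ↥X₁) → Fin n₁ → Finset α → Prop :=
    fun e i A => ∀ x : Fin n₁, (x ∈ arc i k ↔ ((e x : α) ∈ A)) with hG1def
  set Good₂ : (Fin n₂ ≃ ↥X₂) → Fin n₂ → Finset α → Prop :=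
    fun e j A => ∀ x : Fin n₂, (x ∈ arc j ℓ ↔ ((e x : α) ∈ A)) with hG2def
  -- uniqueness of arc starts
  have huniq₁ : ∀ (e : Fin n₁ ≃ ↥X₁) i i' A, Good₁ e i A → Good₁ e i' A → i = i' := by
    intro e i i' A h h'
    refine arc_start_eq h2k ?_ ?_
    · exact (h i').mpr ((h' i').mp (self_mem_arc hk))
    · exact (h' i).mpr ((h i).mp (self_mem_arc hk))
  have huniq₂ : ∀ (e : Fin n₂ ≃ ↥X₂) j j' A, Good₂ e j A → Good₂ e j' A → j = j' := by
    intro e j j' A h h'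
    refine arc_start_eq h2l ?_ ?_
    · exact (h j').mpr ((h' j').mp (self_mem_arc hl))
    · exact (h' j).mpr ((h j).mp (self_mem_arc hl))
  -- A is determined by (e₁, e₂, i, j)
  have hdet : ∀ (e₁ : Fin n₁ ≃ ↥X₁) (e₂ : Fin n₂ ≃ ↥X₂) i j A A', A ∈ F → A' ∈ F →
      Good₁ e₁ i A → Good₂ e₂ j A → Good₁ e₁ i A' → Good₂ e₂ j A' → A = A' := by
    have key : ∀ (e₁ : Fin n₁ ≃ ↥X₁) (e₂ : Fin n₂ ≃ ↥X₂) i j A A', A ∈ F → A' ∈ F →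
        Good₁ e₁ i A → Good₂ e₂ j A → Good₁ e₁ i A' → Good₂ e₂ j A' → A ⊆ A' := by
      intro e₁ e₂ i j A A' hA hA' g1 g2 g1' g2' y hy
      rcases Finset.mem_union.mp (hsub A hA hy) with hy1 | hy2
      · have hey : ((e₁ (e₁.symm ⟨y, hy1⟩) : ↥X₁) : α) = y := by simp
        have harc : e₁.symm ⟨y, hy1⟩ ∈ arc i k := (g1 _).mpr (by rw [hey]; exact hy)
        have := (g1' _).mp harc
        rwa [hey] at this
      · have hey : ((e₂ (e₂.symm ⟨y, hy2⟩) : ↥X₂) : α) = y := by simp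
        have harc : e₂.symm ⟨y, hy2⟩ ∈ arc j ℓ := (g2 _).mpr (by rw [hey]; exact hy)
        have := (g2' _).mp harc
        rwa [hey] at this
    intro e₁ e₂ i j A A' hA hA' g1 g2 g1' g2'
    exact Finset.Subset.antisymm (key e₁ e₂ i j A A' hA hA' g1 g2 g1' g2')
      (key e₁ e₂ i j A' A hA' hA g1' g2' g1 g2)
  -- per-(e₁,e₂) fibers
  set S : Finset α → (Fin n₁ ≃ ↥X₁) → (Fin n₂ ≃ ↥X₂) → Finset (Fin n₁ × Fin n₂) :=
    fun A e₁ e₂ => univ.filter (fun ij => Good₁ e₁ ij.1 A ∧ Good₂ e₂ ij.2 A) with hSdef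
  -- per-pair upper bound
  have hupper : ∀ (e₁ : Fin n₁ ≃ ↥X₁) (e₂ : Fin n₂ ≃ ↥X₂),
      ∑ A ∈ F, (S A e₁ e₂).card ≤ max (k * n₂) (ℓ * n₁) := by
    intro e₁ e₂
    have hdisjS : ∀ A ∈ F, ∀ A' ∈ F, A ≠ A' → Disjoint (S A e₁ e₂) (S A' e₁ e₂) := by
      intro A hA A' hA' hne
      rw [Finset.disjoint_left]
      intro ij hij hij'
      rw [hSdef, Finset.mem_filter] at hij hij'
      exact hne (hdet e₁ e₂ ij.1 ij.2 A A' hA hA' hij.2.1 hij.2.2 hij'.2.1 hij'.2.2)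
    rw [← Finset.card_biUnion hdisjS]
    apply product_bound k ℓ n₁ n₂ hk hl h2k h2l
    intro p hp q hq
    rw [Finset.mem_biUnion] at hp hq
    obtain ⟨A, hA, hpA⟩ := hp
    obtain ⟨A', hA', hqA⟩ := hq
    rw [hSdef, Finset.mem_filter] at hpA hqA
    by_cases hAA : A = A'
    · subst hAA
      have h1 : p.1 = q.1 := huniq₁ e₁ p.1 q.1 A hpA.2.1 hqA.2.1
      left
      rw [h1]
      have : fdist q.1 q.1 = 0 := by simp [fdist, sub_self]
      omega
    · obtain ⟨y, hy⟩ := hint A hA A' hA'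
      rw [Finset.mem_inter] at hy
      rcases Finset.mem_union.mp (hsub A hA hy.1) with hy1 | hy2
      · left
        have hey : ((e₁ (e₁.symm ⟨y, hy1⟩) : ↥X₁) : α) = y := by simp
        have m1 : e₁.symm ⟨y, hy1⟩ ∈ arc p.1 k := (hpA.2.1 _).mpr (by rw [hey]; exact hy.1)
        have m2 : e₁.symm ⟨y, hy1⟩ ∈ arc q.1 k := (hqA.2.1 _).mpr (by rw [hey]; exact hy.2)
        exact fdist_lt_of_arc_inter hk m1 m2
      · right
        have hey : ((e₂ (e₂.symm ⟨y, hy2⟩) : ↥X₂) : α) = y := by simp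
        have m1 : e₂.symm ⟨y, hy2⟩ ∈ arc p.2 ℓ := (hpA.2.2 _).mpr (by rw [hey]; exact hy.1)
        have m2 : e₂.symm ⟨y, hy2⟩ ∈ arc q.2 ℓ := (hqA.2.2 _).mpr (by rw [hey]; exact hy.2)
        exact fdist_lt_of_arc_inter hl m1 m2
  -- the 4-tuple count for a fixed A, two ways
  set G : Finset α → Finset (((Fin n₁ ≃ ↥X₁) × Fin n₁) × ((Fin n₂ ≃ ↥X₂) × Fin n₂)) :=
    fun A => (univ ×ˢ univ).filter
      (fun t => Good₁ t.1.1 t.1.2 A ∧ Good₂ t.2.1 t.2.2 A) with hGdef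
  -- way 1 : product of one-sided counts
  have hway1 : ∀ A ∈ F,
      n₁ * (k.factorial * (n₁ - k).factorial) * (n₂ * (ℓ.factorial * (n₂ - ℓ).factorial))
        ≤ (G A).card := by
    intro A hA
    have hGA : G A = ((univ : Finset ((Fin n₁ ≃ ↥X₁) × Fin n₁)).filter
          (fun q => Good₁ q.1 q.2 A)) ×ˢ
        ((univ : Finset ((Fin n₂ ≃ ↥X₂) × Fin n₂)).filter (fun q => Good₂ q.1 q.2 A)) := by
      ext t
      simp only [hGdef, Finset.mem_filter, Finset.mem_product, Finset.mem_univ, true_and]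
    rw [hGA, Finset.card_product]
    exact Nat.mul_le_mul
      (count_good X₁ A n₁ k hn₁ hk h2k (hsizes A hA).1)
      (count_good X₂ A n₂ ℓ hn₂ hl h2l (hsizes A hA).2)
  -- way 2 : fiber over the pair of equivs
  have hway2 : ∀ A, (G A).card =
      ∑ p ∈ (univ ×ˢ univ : Finset ((Fin n₁ ≃ ↥X₁) × (Fin n₂ ≃ ↥X₂))), (S A p.1 p.2).card := by
    intro A
    rw [Finset.card_eq_sum_card_fiberwise
      (f := fun t : ((Fin n₁ ≃ ↥X₁) × Fin n₁) × ((Fin n₂ ≃ ↥X₂) × Fin n₂) => (t.1.1, t.2.1))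
      (t := (univ ×ˢ univ : Finset ((Fin n₁ ≃ ↥X₁) × (Fin n₂ ≃ ↥X₂))))
      (fun t _ => by simp)]
    apply Finset.sum_congr rfl
    intro p _
    apply Finset.card_bij (fun t _ => ((t.1.2, t.2.2) : Fin n₁ × Fin n₂))
    · intro t ht
      simp only [Finset.mem_filter, hGdef] at ht
      rw [hSdef, Finset.mem_filter]
      obtain ⟨⟨_, hg⟩, hfib⟩ := ht
      have h1 : t.1.1 = p.1 := congrArg Prod.fst hfib
      have h2 : t.2.1 = p.2 := congrArg Prod.snd hfib
      exact ⟨Finset.mem_univ _, by rw [← h1, ← h2]; exact hg⟩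
    · intro t ht t' ht' hh
      simp only [Finset.mem_filter, hGdef] at ht ht'
      have h1 : t.1.1 = p.1 := congrArg Prod.fst ht.2
      have h2 : t.2.1 = p.2 := congrArg Prod.snd ht.2
      have h1' : t'.1.1 = p.1 := congrArg Prod.fst ht'.2
      have h2' : t'.2.1 = p.2 := congrArg Prod.snd ht'.2
      obtain ⟨h3, h4⟩ := Prod.mk.inj hh
      have : t.1 = t'.1 := Prod.ext (h1.trans h1'.symm) h3
      have that : t.2 = t'.2 := Prod.ext (h2.trans h2'.symm) h4
      exact Prod.ext this that
    · intro ij hij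
      rw [hSdef, Finset.mem_filter] at hij
      refine ⟨((p.1, ij.1), (p.2, ij.2)), ?_, rfl⟩
      simp only [Finset.mem_filter, hGdef]
      refine ⟨⟨by simp, hij.2⟩, by simp⟩
  -- global double counting
  have hglobal : F.card * (n₁ * (k.factorial * (n₁ - k).factorial) *
      (n₂ * (ℓ.factorial * (n₂ - ℓ).factorial))) ≤
      (n₁.factorial * n₂.factorial) * max (k * n₂) (ℓ * n₁) := by
    calc F.card * (n₁ * (k.factorial * (n₁ - k).factorial) *
          (n₂ * (ℓ.factorial * (n₂ - ℓ).factorial)))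
        = ∑ _A ∈ F, (n₁ * (k.factorial * (n₁ - k).factorial) *
          (n₂ * (ℓ.factorial * (n₂ - ℓ).factorial))) := by
          rw [Finset.sum_const, smul_eq_mul]
      _ ≤ ∑ A ∈ F, (G A).card := Finset.sum_le_sum hway1
      _ = ∑ A ∈ F, ∑ p ∈ (univ ×ˢ univ : Finset ((Fin n₁ ≃ ↥X₁) × (Fin n₂ ≃ ↥X₂))),
            (S A p.1 p.2).card := Finset.sum_congr rfl (fun A _ => hway2 A)
      _ = ∑ p ∈ (univ ×ˢ univ : Finset ((Fin n₁ ≃ ↥X₁) × (Fin n₂ ≃ ↥X₂))),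
            ∑ A ∈ F, (S A p.1 p.2).card := Finset.sum_comm
      _ ≤ ∑ _p ∈ (univ ×ˢ univ : Finset ((Fin n₁ ≃ ↥X₁) × (Fin n₂ ≃ ↥X₂))),
            max (k * n₂) (ℓ * n₁) := Finset.sum_le_sum (fun p _ => hupper p.1 p.2)
      _ = (n₁.factorial * n₂.factorial) * max (k * n₂) (ℓ * n₁) := by
          rw [Finset.sum_const, smul_eq_mul, Finset.card_product]
          congr 2
          · rw [Finset.card_univ, Fintype.card_equiv (Fintype.equivOfCardEq (by
              rw [Fintype.card_fin, Fintype.card_coe, hn₁]))]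
            rw [Fintype.card_fin]
          · rw [Finset.card_univ, Fintype.card_equiv (Fintype.equivOfCardEq (by
              rw [Fintype.card_fin, Fintype.card_coe, hn₂]))]
            rw [Fintype.card_fin]
  -- final arithmetic
  set D₁ := n₁ * (k.factorial * (n₁ - k).factorial) with hD₁
  set D₂ := n₂ * (ℓ.factorial * (n₂ - ℓ).factorial) with hD₂
  have idA : (n₁ - 1).choose (k - 1) * D₁ = k * n₁.factorial := by
    have e1 : k.factorial = k * (k - 1).factorial := by
      conv_lhs => rw [show k = (k - 1) + 1 by omega]
      rw [Nat.factorial_succ]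
      congr 1
      omega
    have e2 : n₁.factorial = n₁ * (n₁ - 1).factorial := by
      conv_lhs => rw [show n₁ = (n₁ - 1) + 1 by omega]
      rw [Nat.factorial_succ]
      congr 1
      omega
    have e3 := Nat.choose_mul_factorial_mul_factorial (n := n₁ - 1) (k := k - 1) (by omega)
    rw [show n₁ - 1 - (k - 1) = n₁ - k by omega] at e3
    calc (n₁ - 1).choose (k - 1) * D₁
        = n₁ * k * ((n₁ - 1).choose (k - 1) * (k - 1).factorial * (n₁ - k).factorial) := by
          rw [hD₁, e1]; ring
      _ = n₁ * k * (n₁ - 1).factorial := by rw [e3]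
      _ = k * n₁.factorial := by rw [e2]; ring
  have idB : n₂.choose ℓ * D₂ = n₂ * n₂.factorial := by
    have e3 := Nat.choose_mul_factorial_mul_factorial (n := n₂) (k := ℓ) (by omega)
    calc n₂.choose ℓ * D₂
        = n₂ * (n₂.choose ℓ * ℓ.factorial * (n₂ - ℓ).factorial) := by rw [hD₂]; ring
      _ = n₂ * n₂.factorial := by rw [e3]
  have idC : n₁.choose k * D₁ = n₁ * n₁.factorial := by
    have e3 := Nat.choose_mul_factorial_mul_factorial (n := n₁) (k := k) (by omega)
    calc n₁.choose k * D₁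
        = n₁ * (n₁.choose k * k.factorial * (n₁ - k).factorial) := by rw [hD₁]; ring
      _ = n₁ * n₁.factorial := by rw [e3]
  have idD : (n₂ - 1).choose (ℓ - 1) * D₂ = ℓ * n₂.factorial := by
    have e1 : ℓ.factorial = ℓ * (ℓ - 1).factorial := by
      conv_lhs => rw [show ℓ = (ℓ - 1) + 1 by omega]
      rw [Nat.factorial_succ]
      congr 1
      omega
    have e2 : n₂.factorial = n₂ * (n₂ - 1).factorial := by
      conv_lhs => rw [show n₂ = (n₂ - 1) + 1 by omega]
      rw [Nat.factorial_succ]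
      congr 1
      omega
    have e3 := Nat.choose_mul_factorial_mul_factorial (n := n₂ - 1) (k := ℓ - 1) (by omega)
    rw [show n₂ - 1 - (ℓ - 1) = n₂ - ℓ by omega] at e3
    calc (n₂ - 1).choose (ℓ - 1) * D₂
        = n₂ * ℓ * ((n₂ - 1).choose (ℓ - 1) * (ℓ - 1).factorial * (n₂ - ℓ).factorial) := by
          rw [hD₂, e1]; ring
      _ = n₂ * ℓ * (n₂ - 1).factorial := by rw [e3]
      _ = ℓ * n₂.factorial := by rw [e2]; ring
  have hDpos : 0 < D₁ * D₂ := by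
    apply Nat.mul_pos <;>
      exact Nat.mul_pos (by omega) (Nat.mul_pos (Nat.factorial_pos _) (Nat.factorial_pos _))
  refine Nat.le_of_mul_le_mul_right ?_ hDpos
  calc F.card * (D₁ * D₂)
      ≤ (n₁.factorial * n₂.factorial) * max (k * n₂) (ℓ * n₁) := hglobal
    _ = max ((n₁ - 1).choose (k - 1) * n₂.choose ℓ) (n₁.choose k * (n₂ - 1).choose (ℓ - 1))
          * (D₁ * D₂) := by
        rw [max_mul_right]
        rw [show (n₁ - 1).choose (k - 1) * n₂.choose ℓ * (D₁ * D₂)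
            = ((n₁ - 1).choose (k - 1) * D₁) * (n₂.choose ℓ * D₂) by ring]
        rw [show n₁.choose k * (n₂ - 1).choose (ℓ - 1) * (D₁ * D₂)
            = (n₁.choose k * D₁) * ((n₂ - 1).choose (ℓ - 1) * D₂) by ring]
        rw [idA, idB, idC, idD, mul_max_left]
        congr 1 <;> ring
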